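/- Let A ∈ M_k ⊗ M_m be a positive semidefinite Hermitian matrix of tensor rank 2, admitting a minimal Hermitian decomposition A = C_1 ⊗ D_1 + C_2 ⊗ D_2 with C_1, D_1 positive semidefinite, range(C_2) ⊆ range(C_1) and range(D_2) ⊆ range(D_1). Then A admits a separable decomposition A = α_1 ⊗ β_1 + α_2 ⊗ β_2 with all α_i ∈ M_k, β_i ∈ M_m positive semidefinite Hermitian. -/

import Mathlib

open Matrix Kronecker ComplexOrder

set_option linter.unusedSectionVars false
set_option maxHeartbeats 1600000

namespace Stmt17Helpers

variable {n : Type*} [Fintype n] [DecidableEq n]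

lemma herm_qf_real {M : Matrix n n ℂ} (hM : M.IsHermitian) (x : n → ℂ) :
    star x ⬝ᵥ M *ᵥ x = ((star x ⬝ᵥ M *ᵥ x).re : ℂ) := by
  have h : (starRingEnd ℂ) (star x ⬝ᵥ M *ᵥ x) = star x ⬝ᵥ M *ᵥ x := by
    have h1 : star (star x ⬝ᵥ M *ᵥ x) = star (M *ᵥ x) ⬝ᵥ x := by
      rw [star_dotProduct, star_star]
    show star (star x ⬝ᵥ M *ᵥ x) = _
    rw [h1, star_mulVec, ← dotProduct_mulVec, hM.eq]
  exact (Complex.conj_eq_iff_re.mp h).symm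

lemma posSemidef_of_herm {M : Matrix n n ℂ} (hM : M.IsHermitian)
    (h : ∀ x : n → ℂ, 0 ≤ (star x ⬝ᵥ M *ᵥ x).re) : M.PosSemidef := by
  refine PosSemidef.of_dotProduct_mulVec_nonneg hM fun x => ?_
  rw [herm_qf_real hM x]
  exact_mod_cast Complex.zero_le_real.mpr (h x)

lemma hsmul_herm {M : Matrix n n ℂ} (hM : M.IsHermitian) (c : ℝ) :
    ((c : ℂ) • M).IsHermitian := by
  unfold Matrix.IsHermitian
  rw [conjTranspose_smul, hM.eq]
  simp

lemma psd_smul_real {M : Matrix n n ℂ} (hM : M.PosSemidef) {c : ℝ} (hc : 0 ≤ c) :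
    ((c : ℂ) • M).PosSemidef := by
  refine posSemidef_of_herm (hsmul_herm hM.1 c) fun x => ?_
  rw [smul_mulVec, dotProduct_smul]
  simp only [smul_eq_mul, Complex.mul_re, Complex.ofReal_re, Complex.ofReal_im, zero_mul, sub_zero]
  exact mul_nonneg hc (hM.re_dotProduct_nonneg x)

lemma ker_incl {C₁ C₂ : Matrix n n ℂ} (hC₁ : C₁.IsHermitian) (hC₂ : C₂.IsHermitian)
    (hr : ∀ x : n → ℂ, (∃ z, C₂ *ᵥ z = x) → ∃ z, C₁ *ᵥ z = x) :
    ∀ x, C₁ *ᵥ x = 0 → C₂ *ᵥ x = 0 := by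
  intro x hx
  have hrow : ∀ y : n → ℂ, star x ⬝ᵥ C₂ *ᵥ y = 0 := by
    intro y
    obtain ⟨z, hz⟩ := hr (C₂ *ᵥ y) ⟨y, rfl⟩
    rw [← hz, dotProduct_mulVec]
    have : star x ᵥ* C₁ = 0 := by
      have := congrArg star (star_mulVec C₁ x)
      rw [star_star, hC₁.eq] at this
      rw [hx] at this
      exact star_eq_zero.mp this.symm
    rw [this, zero_dotProduct]
  have h2 : star (C₂ *ᵥ x) ⬝ᵥ (C₂ *ᵥ x) = 0 := by
    have h3 := hrow (C₂ *ᵥ x)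
    have h4 : star x ᵥ* C₂ = star (C₂ *ᵥ x) := by
      rw [star_mulVec, hC₂.eq]
    rw [dotProduct_mulVec, h4] at h3
    exact h3
  exact (dotProduct_star_self_eq_zero).mp h2

lemma psd_neg_eq_zero {M : Matrix n n ℂ} (hM : M.PosSemidef) (hM' : (-M).PosSemidef) :
    M = 0 := by
  have hz : ∀ x : n → ℂ, M *ᵥ x = 0 := by
    intro x
    rw [← hM.dotProduct_mulVec_zero_iff]
    have h1 := hM.dotProduct_mulVec_nonneg x
    have h2 := hM'.dotProduct_mulVec_nonneg x
    rw [neg_mulVec, dotProduct_neg] at h2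
    have := neg_nonneg.mp h2
    exact le_antisymm this h1
  ext i j
  have := congrFun (hz (Pi.single j 1)) i
  rw [mulVec_single] at this
  simpa using this

variable {n : Type*} [Fintype n] [DecidableEq n]

lemma exists_shift {C₁ C₂ : Matrix n n ℂ} (hC₁ : C₁.PosSemidef) (hC₂ : C₂.IsHermitian)
    (hker : ∀ x, C₁ *ᵥ x = 0 → C₂ *ᵥ x = 0) :
    ∃ t : ℝ, ((t : ℂ) • C₁ - C₂).PosSemidef := by
  classical
  have hH := hC₁.1
  set U : Matrix n n ℂ := (hH.eigenvectorUnitary : Matrix n n ℂ) with hUdef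
  set d : n → ℝ := hH.eigenvalues with hddef
  have hdnn : ∀ i, 0 ≤ d i := fun i => hC₁.eigenvalues_nonneg i
  have hUU : U * star U = 1 := mem_unitaryGroup_iff.mp hH.eigenvectorUnitary.2
  have hUU' : star U * U = 1 := mem_unitaryGroup_iff'.mp hH.eigenvectorUnitary.2
  set Dg : Matrix n n ℂ := diagonal (fun i => (d i : ℂ)) with hDgdef
  have hspec : C₁ = U * Dg * star U := by
    have := hH.spectral_theorem
    rw [Unitary.conjStarAlgAut_apply] at this
    exact this
  set M : Matrix n n ℂ := star U * C₂ * U with hMdef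
  have hMH : M.IsHermitian := by
    have : Mᴴ = M := by
      rw [hMdef]
      rw [show star U = Uᴴ from rfl, conjTranspose_mul, conjTranspose_mul,
        conjTranspose_conjTranspose, hC₂.eq, mul_assoc]
    exact this
  -- columns at zero eigenvalue vanish
  have hcol : ∀ i, d i = 0 → ∀ j, M j i = 0 := by
    intro i hi j
    have h1 : C₁ *ᵥ (U *ᵥ Pi.single i 1) = 0 := by
      rw [mulVec_mulVec, hspec, mul_assoc, mul_assoc, hUU', mul_one, ← mulVec_mulVec,
        diagonal_mulVec_single]
      rw [hi]
      simp
    have h2 := hker _ h1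
    have h3 : M *ᵥ Pi.single i 1 = 0 := by
      rw [hMdef, ← mulVec_mulVec, ← mulVec_mulVec, h2, mulVec_zero]
    have := congrFun h3 j
    simpa using this
  have hrow : ∀ i j, d i = 0 → M i j = 0 := by
    intro i j hi
    rw [← hMH.apply, hcol i hi j, star_zero]
  set w : n → n → ℝ := fun i j => ‖M i j‖ / (Real.sqrt (d i) * Real.sqrt (d j)) with hwdef
  set W : ℝ := ∑ i, ∑ j, w i j with hWdef
  have hwnn : ∀ i j, 0 ≤ w i j := fun i j =>
    div_nonneg (norm_nonneg _) (mul_nonneg (Real.sqrt_nonneg _) (Real.sqrt_nonneg _))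
  have hWnn : 0 ≤ W := Finset.sum_nonneg fun i _ => Finset.sum_nonneg fun j _ => hwnn i j
  refine ⟨W + 1, ?_⟩
  have hDgH : Dg.IsHermitian := by
    rw [hDgdef]
    unfold Matrix.IsHermitian
    rw [diagonal_conjTranspose]
    congr 1
    funext i
    simp [Pi.star_def]
  have hsmulherm : ∀ (P : Matrix n n ℂ), P.IsHermitian → ∀ c : ℝ, ((c : ℂ) • P).IsHermitian := by
    intro P hP c
    unfold Matrix.IsHermitian
    rw [conjTranspose_smul, hP.eq]
    simp
  have hNH : ((((W + 1 : ℝ)) : ℂ) • Dg - M).IsHermitian := (hsmulherm Dg hDgH _).sub hMH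
  have hN : ((((W + 1 : ℝ)) : ℂ) • Dg - M).PosSemidef := by
    refine posSemidef_of_herm hNH fun x => ?_
    set u : n → ℝ := fun i => Real.sqrt (d i) * ‖x i‖ with hudef
    set S : ℝ := ∑ i, d i * ‖x i‖ ^ 2 with hSdef
    have hu2 : ∀ i, u i ^ 2 = d i * ‖x i‖ ^ 2 := by
      intro i
      rw [hudef]
      rw [mul_pow, Real.sq_sqrt (hdnn i)]
    have hS' : S = ∑ i, u i ^ 2 := by
      rw [hSdef]
      exact Finset.sum_congr rfl fun i _ => (hu2 i).symm
    have hSnn : 0 ≤ S :=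
      Finset.sum_nonneg fun i _ => mul_nonneg (hdnn i) (sq_nonneg _)
    have husq : ∀ i, u i ^ 2 ≤ S := by
      intro i
      rw [hS']
      exact Finset.single_le_sum (fun l _ => sq_nonneg (u l)) (Finset.mem_univ i)
    have hDgx : star x ⬝ᵥ Dg *ᵥ x = (S : ℂ) := by
      rw [hDgdef]
      have : ∀ i, star x i * ((diagonal (fun i => ((d i : ℂ))) *ᵥ x) i)
          = ((d i * ‖x i‖ ^ 2 : ℝ) : ℂ) := by
        intro i
        rw [mulVec_diagonal]
        have : star x i * ((d i : ℂ) * x i) = (d i : ℂ) * (star x i * x i) := by ring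
        rw [this]
        have hconj : star x i * x i = ((‖x i‖ : ℂ)) ^ 2 := by
          rw [show star x i = (starRingEnd ℂ) (x i) from rfl, RCLike.conj_mul]
          norm_cast
        rw [hconj]
        push_cast
        ring
      unfold dotProduct
      rw [Finset.sum_congr rfl fun i _ => this i]
      rw [hSdef]
      push_cast
      rfl
    have hMx : (star x ⬝ᵥ M *ᵥ x).re ≤ W * S := by
      have step1 : (star x ⬝ᵥ M *ᵥ x).re ≤ ∑ i, ∑ j, ‖M i j‖ * (‖x i‖ * ‖x j‖) := by
        calc (star x ⬝ᵥ M *ᵥ x).re ≤ ‖star x ⬝ᵥ M *ᵥ x‖ := Complex.re_le_norm _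
          _ ≤ ∑ i, ‖star x i * (M *ᵥ x) i‖ := norm_sum_le _ _
          _ ≤ ∑ i, ∑ j, ‖M i j‖ * (‖x i‖ * ‖x j‖) := by
              refine Finset.sum_le_sum fun i _ => ?_
              rw [norm_mul]
              calc ‖star x i‖ * ‖(M *ᵥ x) i‖ ≤ ‖x i‖ * ∑ j, ‖M i j * x j‖ := by
                    rw [Pi.star_apply, norm_star]
                    exact mul_le_mul_of_nonneg_left (norm_sum_le _ _) (norm_nonneg _)
                _ = ∑ j, ‖M i j‖ * (‖x i‖ * ‖x j‖) := by
                    rw [Finset.mul_sum]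
                    refine Finset.sum_congr rfl fun j _ => ?_
                    rw [norm_mul]
                    ring
      have step2 : ∀ i j, ‖M i j‖ * (‖x i‖ * ‖x j‖) ≤ w i j * S := by
        intro i j
        rcases eq_or_lt_of_le (hdnn i) with hi | hi
        · rw [hrow i j hi.symm]
          simp only [norm_zero, zero_mul]
          exact mul_nonneg (hwnn i j) hSnn
        rcases eq_or_lt_of_le (hdnn j) with hj | hj
        · rw [hcol j hj.symm i]
          simp only [norm_zero, zero_mul]
          exact mul_nonneg (hwnn i j) hSnn
        have hsi : 0 < Real.sqrt (d i) := Real.sqrt_pos.mpr hi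
        have hsj : 0 < Real.sqrt (d j) := Real.sqrt_pos.mpr hj
        have heq : ‖M i j‖ * (‖x i‖ * ‖x j‖) = w i j * (u i * u j) := by
          rw [hwdef, hudef]
          field_simp
        rw [heq]
        refine mul_le_mul_of_nonneg_left ?_ (hwnn i j)
        nlinarith [husq i, husq j, sq_nonneg (u i - u j)]
      have step3 : ∑ i, ∑ j, ‖M i j‖ * (‖x i‖ * ‖x j‖) ≤ W * S := by
        rw [hWdef, Finset.sum_mul]
        refine Finset.sum_le_sum fun i _ => ?_
        rw [Finset.sum_mul]
        exact Finset.sum_le_sum fun j _ => step2 i j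
      linarith
    have hre : (star x ⬝ᵥ (((((W + 1 : ℝ)) : ℂ) • Dg - M)) *ᵥ x).re
        = (W + 1) * S - (star x ⬝ᵥ M *ᵥ x).re := by
      rw [sub_mulVec, dotProduct_sub, Complex.sub_re, smul_mulVec, dotProduct_smul,
        hDgx]
      congr 1
      rw [smul_eq_mul, ← Complex.ofReal_mul, Complex.ofReal_re]
    rw [hre]
    nlinarith
  have hkey : (((W + 1 : ℝ)) : ℂ) • C₁ - C₂ = U * ((((W + 1 : ℝ)) : ℂ) • Dg - M) * star U := by
    rw [Matrix.mul_sub, Matrix.sub_mul, mul_smul_comm, smul_mul_assoc, ← hspec, hMdef]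
    congr 1
    simp only [← mul_assoc]
    rw [hUU, one_mul, mul_assoc, hUU, mul_one]
  rw [hkey, show star U = Uᴴ from rfl]
  exact hN.mul_mul_conjTranspose_same U


lemma qf_expand {p : Type*} [Fintype p] (C : Matrix p p ℂ) (x : p → ℂ) :
    star x ⬝ᵥ C *ᵥ x = ∑ r, ∑ s, star (x r) * C r s * x s := by
  simp only [dotProduct, mulVec, Pi.star_apply, Finset.mul_sum, mul_assoc]

lemma kron_qf {p q : Type*} [Fintype p] [Fintype q] (C : Matrix p p ℂ) (D : Matrix q q ℂ)
    (x : p → ℂ) (y : q → ℂ) :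
    star (fun rp : p × q => x rp.1 * y rp.2) ⬝ᵥ (C ⊗ₖ D) *ᵥ (fun rp : p × q => x rp.1 * y rp.2)
      = (star x ⬝ᵥ C *ᵥ x) * (star y ⬝ᵥ D *ᵥ y) := by
  rw [qf_expand, qf_expand, qf_expand]
  simp only [Fintype.sum_prod_type]
  conv_rhs => rw [Fintype.sum_mul_sum]
  refine Finset.sum_congr rfl fun r _ => ?_
  refine Finset.sum_congr rfl fun a _ => ?_
  conv_rhs => rw [Fintype.sum_mul_sum]
  refine Finset.sum_congr rfl fun s _ => ?_
  refine Finset.sum_congr rfl fun b _ => ?_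
  simp only [star_mul', kroneckerMap_apply]
  ring

section helpers
variable {n : Type*} [Fintype n] [DecidableEq n]

lemma herm_qf_real' {M : Matrix n n ℂ} (hM : M.IsHermitian) (x : n → ℂ) :
    star x ⬝ᵥ M *ᵥ x = ((star x ⬝ᵥ M *ᵥ x).re : ℂ) := by
  have h : (starRingEnd ℂ) (star x ⬝ᵥ M *ᵥ x) = star x ⬝ᵥ M *ᵥ x := by
    have h1 : star (star x ⬝ᵥ M *ᵥ x) = star (M *ᵥ x) ⬝ᵥ x := by
      rw [star_dotProduct, star_star]
    show star (star x ⬝ᵥ M *ᵥ x) = _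
    rw [h1, star_mulVec, ← dotProduct_mulVec, hM.eq]
  exact (Complex.conj_eq_iff_re.mp h).symm

lemma posSemidef_of_herm' {M : Matrix n n ℂ} (hM : M.IsHermitian)
    (h : ∀ x : n → ℂ, 0 ≤ (star x ⬝ᵥ M *ᵥ x).re) : M.PosSemidef := by
  refine PosSemidef.of_dotProduct_mulVec_nonneg hM fun x => ?_
  rw [herm_qf_real' hM x]
  exact_mod_cast Complex.zero_le_real.mpr (h x)

lemma psd_re_nonneg' {M : Matrix n n ℂ} (hM : M.PosSemidef) (x : n → ℂ) :
    0 ≤ (star x ⬝ᵥ M *ᵥ x).re := by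
  simpa using hM.re_dotProduct_nonneg x

lemma hsmul_herm' {M : Matrix n n ℂ} (hM : M.IsHermitian) (c : ℝ) :
    ((c : ℂ) • M).IsHermitian := by
  unfold Matrix.IsHermitian
  rw [conjTranspose_smul, hM.eq]
  simp

lemma exists_pos_form {C : Matrix n n ℂ} (hC : C.PosSemidef) (hne : C ≠ 0) :
    ∃ x : n → ℂ, 0 < (star x ⬝ᵥ C *ᵥ x).re := by
  by_contra h
  push_neg at h
  apply hne
  have hz : ∀ x : n → ℂ, C *ᵥ x = 0 := by
    intro x
    rw [← hC.dotProduct_mulVec_zero_iff]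
    rw [herm_qf_real' hC.1 x]
    have h1 := psd_re_nonneg' hC x
    have : (star x ⬝ᵥ C *ᵥ x).re = 0 := le_antisymm (h x) h1
    rw [this]
    simp
  ext i j
  have := congrFun (hz (Pi.single j 1)) i
  rw [mulVec_single] at this
  simpa using this

end helpers

lemma compress {p q : Type*} [Fintype p] [Fintype q] [DecidableEq p] [DecidableEq q]
    {A : Matrix (p × q) (p × q) ℂ} {C₁ C₂ : Matrix p p ℂ} {D₁ D₂ : Matrix q q ℂ}
    (hA : A.PosSemidef) (hC₁ : C₁.IsHermitian) (hC₂ : C₂.IsHermitian)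
    (hD₁ : D₁.IsHermitian) (hD₂ : D₂.IsHermitian)
    (hdec : A = C₁ ⊗ₖ D₁ + C₂ ⊗ₖ D₂) (x : p → ℂ) :
    (((star x ⬝ᵥ C₁ *ᵥ x).re : ℂ) • D₁ + ((star x ⬝ᵥ C₂ *ᵥ x).re : ℂ) • D₂).PosSemidef := by
  refine posSemidef_of_herm' ((hsmul_herm' hD₁ _).add (hsmul_herm' hD₂ _)) fun y => ?_
  have hz := psd_re_nonneg' hA (fun rp : p × q => x rp.1 * y rp.2)
  have he : star y ⬝ᵥ (((star x ⬝ᵥ C₁ *ᵥ x).re : ℂ) • D₁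
        + ((star x ⬝ᵥ C₂ *ᵥ x).re : ℂ) • D₂) *ᵥ y
      = star (fun rp : p × q => x rp.1 * y rp.2) ⬝ᵥ A *ᵥ (fun rp : p × q => x rp.1 * y rp.2) := by
    rw [hdec]
    conv_rhs => rw [add_mulVec, dotProduct_add, kron_qf, kron_qf]
    conv_lhs => rw [add_mulVec, smul_mulVec, smul_mulVec, dotProduct_add,
      dotProduct_smul, dotProduct_smul]
    rw [← herm_qf_real' hC₁ x, ← herm_qf_real' hC₂ x]
    simp [smul_eq_mul]
  rw [he]
  exact hz

lemma qf_sub_smul {n : Type*} [Fintype n] (C₁ C₂ : Matrix n n ℂ) (t : ℝ) (x : n → ℂ) :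
    (star x ⬝ᵥ (((t : ℂ) • C₁ - C₂)) *ᵥ x).re
      = t * (star x ⬝ᵥ C₁ *ᵥ x).re - (star x ⬝ᵥ C₂ *ᵥ x).re := by
  rw [sub_mulVec, dotProduct_sub, Complex.sub_re, smul_mulVec, dotProduct_smul,
    smul_eq_mul, Complex.mul_re, Complex.ofReal_re, Complex.ofReal_im]
  ring

lemma qf_add_smul {n : Type*} [Fintype n] (D₁ D₂ : Matrix n n ℂ) (t : ℝ) (x : n → ℂ) :
    (star x ⬝ᵥ ((D₁ + (t : ℂ) • D₂)) *ᵥ x).re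
      = (star x ⬝ᵥ D₁ *ᵥ x).re + t * (star x ⬝ᵥ D₂ *ᵥ x).re := by
  rw [add_mulVec, dotProduct_add, Complex.add_re, smul_mulVec, dotProduct_smul,
    smul_eq_mul, Complex.mul_re, Complex.ofReal_re, Complex.ofReal_im]
  ring

lemma qf_smul_smul {n : Type*} [Fintype n] (D₁ D₂ : Matrix n n ℂ) (s t : ℝ) (x : n → ℂ) :
    (star x ⬝ᵥ (((s : ℂ) • D₁ + (t : ℂ) • D₂)) *ᵥ x).re
      = s * (star x ⬝ᵥ D₁ *ᵥ x).re + t * (star x ⬝ᵥ D₂ *ᵥ x).re := by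
  rw [add_mulVec, dotProduct_add, Complex.add_re, smul_mulVec, dotProduct_smul,
    smul_mulVec, dotProduct_smul, smul_eq_mul, smul_eq_mul, Complex.mul_re,
    Complex.mul_re, Complex.ofReal_re, Complex.ofReal_im, Complex.ofReal_re,
    Complex.ofReal_im]
  ring

lemma half {n n' : Type*} [Fintype n] [DecidableEq n] [Fintype n'] [DecidableEq n']
    {C₁ C₂ : Matrix n n ℂ} {D₁ D₂ : Matrix n' n' ℂ}
    (hC₁ : C₁.PosSemidef) (hC₂ : C₂.IsHermitian)
    (hD₁ : D₁.IsHermitian) (hD₂ : D₂.IsHermitian)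
    (hC₁ne : C₁ ≠ 0)
    (hker : ∀ x, C₁ *ᵥ x = 0 → C₂ *ᵥ x = 0)
    (hshift : ∃ t : ℝ, ((t : ℂ) • C₁ - C₂).PosSemidef)
    (hcomp : ∀ x : n → ℂ, (((star x ⬝ᵥ C₁ *ᵥ x).re : ℂ) • D₁
        + ((star x ⬝ᵥ C₂ *ᵥ x).re : ℂ) • D₂).PosSemidef) :
    ∃ b : ℝ, ((b : ℂ) • C₁ - C₂).PosSemidef ∧ (D₁ + (b : ℂ) • D₂).PosSemidef := by
  classical
  obtain ⟨x₀, hx₀⟩ := exists_pos_form hC₁ hC₁ne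
  set T : Set ℝ := {t : ℝ | ((t : ℂ) • C₁ - C₂).PosSemidef} with hTdef
  have hTne : T.Nonempty := hshift
  have hq1 : ∀ x : n → ℂ, 0 ≤ (star x ⬝ᵥ C₁ *ᵥ x).re := fun x => psd_re_nonneg' hC₁ x
  have hmemT : ∀ t ∈ T, ∀ x : n → ℂ,
      (star x ⬝ᵥ C₂ *ᵥ x).re ≤ t * (star x ⬝ᵥ C₁ *ᵥ x).re := by
    intro t ht x
    have := psd_re_nonneg' ht x
    rw [qf_sub_smul] at this
    linarith
  have hbdd : BddBelow T := by
    refine ⟨(star x₀ ⬝ᵥ C₂ *ᵥ x₀).re / (star x₀ ⬝ᵥ C₁ *ᵥ x₀).re, fun t ht => ?_⟩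
    rw [div_le_iff₀ hx₀]
    exact hmemT t ht x₀
  set b : ℝ := sInf T with hbdef
  -- zero quadratic form of C₁ propagates to C₂
  have hker' : ∀ x : n → ℂ, (star x ⬝ᵥ C₁ *ᵥ x).re = 0 → (star x ⬝ᵥ C₂ *ᵥ x).re = 0 := by
    intro x hx
    have h1 : star x ⬝ᵥ C₁ *ᵥ x = 0 := by
      rw [herm_qf_real' hC₁.1 x, hx]
      simp
    have h2 := hker x ((hC₁.dotProduct_mulVec_zero_iff x).mp h1)
    rw [h2, dotProduct_zero]
    simp
  have hbT : b ∈ T := by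
    refine posSemidef_of_herm' ((hsmul_herm' hC₁.1 b).sub hC₂) fun x => ?_
    rw [qf_sub_smul]
    rcases eq_or_lt_of_le (hq1 x) with h0 | hpos
    · rw [← h0, hker' x h0.symm]
      simp
    · have hle : (star x ⬝ᵥ C₂ *ᵥ x).re / (star x ⬝ᵥ C₁ *ᵥ x).re ≤ b := by
        refine le_csInf hTne fun t ht => ?_
        rw [div_le_iff₀ hpos]
        exact hmemT t ht x
      rw [div_le_iff₀ hpos] at hle
      linarith
  refine ⟨b, hbT, ?_⟩
  refine posSemidef_of_herm' (hD₁.add (hsmul_herm' hD₂ b)) fun y => ?_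
  rw [qf_add_smul]
  set P : ℝ := (star y ⬝ᵥ D₁ *ᵥ y).re with hPdef
  set Q : ℝ := (star y ⬝ᵥ D₂ *ᵥ y).re with hQdef
  have hest : ∀ ε : ℝ, 0 < ε → -(ε * |Q|) ≤ P + b * Q := by
    intro ε hε
    have hnotT : (b - ε) ∉ T := by
      intro hmem
      have := csInf_le hbdd hmem
      rw [← hbdef] at this
      linarith
    have hxw : ∃ x : n → ℂ, (b - ε) * (star x ⬝ᵥ C₁ *ᵥ x).re
        - (star x ⬝ᵥ C₂ *ᵥ x).re < 0 := by
      by_contra hall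
      push_neg at hall
      exact hnotT (posSemidef_of_herm' ((hsmul_herm' hC₁.1 (b - ε)).sub hC₂)
        (fun x => by rw [qf_sub_smul]; exact hall x))
    obtain ⟨x, hx⟩ := hxw
    set q1 : ℝ := (star x ⬝ᵥ C₁ *ᵥ x).re with hq1def
    set q2 : ℝ := (star x ⬝ᵥ C₂ *ᵥ x).re with hq2def
    have hq1pos : 0 < q1 := by
      rcases eq_or_lt_of_le (hq1 x) with h0 | hpos
      · exfalso
        rw [← hq1def] at h0
        have h2 := hker' x h0.symm
        rw [← hq2def] at h2
        rw [h2, ← h0] at hx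
        simp at hx
      · exact hpos
    have hq2le : q2 ≤ b * q1 := hmemT b hbT x
    have hcompx := psd_re_nonneg' (hcomp x) y
    rw [qf_smul_smul, ← hPdef, ← hQdef, ← hq1def, ← hq2def] at hcompx
    set r : ℝ := q2 / q1 with hrdef
    have hrb : r ≤ b := by
      rw [hrdef, div_le_iff₀ hq1pos]
      linarith
    have hrε : b - ε < r := by
      rw [hrdef, lt_div_iff₀ hq1pos]
      linarith
    have hPrQ : 0 ≤ P + r * Q := by
      have h1 : 0 ≤ (q1 * P + q2 * Q) / q1 := div_nonneg hcompx hq1pos.le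
      have h2 : (q1 * P + q2 * Q) / q1 = P + r * Q := by
        rw [hrdef]
        field_simp
      rwa [h2] at h1
    nlinarith [abs_nonneg Q, le_abs_self Q, neg_abs_le Q]
  by_contra hcon
  push_neg at hcon
  rcases eq_or_ne Q 0 with hQ0 | hQ0
  · have h1 := hest 1 one_pos
    rw [hQ0] at h1
    simp only [abs_zero, mul_zero, neg_zero] at h1
    rw [hQ0] at hcon
    linarith
  · have habs : 0 < |Q| := abs_pos.mpr hQ0
    have hε : 0 < -(P + b * Q) / (2 * |Q|) := div_pos (by linarith) (by positivity)
    have h2 := hest _ hε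
    have h3 : -(P + b * Q) / (2 * |Q|) * |Q| = -(P + b * Q) / 2 := by
      field_simp
    rw [h3] at h2
    linarith

end Stmt17Helpers

open Stmt17Helpers

/-- A PSD matrix of tensor rank 2 with a minimal Hermitian decomposition
`C₁ ⊗ D₁ + C₂ ⊗ D₂` where `C₁, D₁` are PSD, `range C₂ ⊆ range C₁` and
`range D₂ ⊆ range D₁`, admits a separable decomposition. -/
theorem stmt17 {k m : ℕ} (A : Matrix (Fin k × Fin m) (Fin k × Fin m) ℂ)
    (hA : A.PosSemidef)
    (C₁ C₂ : Matrix (Fin k) (Fin k) ℂ) (D₁ D₂ : Matrix (Fin m) (Fin m) ℂ)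
    (hC₂ : C₂.IsHermitian) (hD₂ : D₂.IsHermitian)
    (hC₁ : C₁.PosSemidef) (hD₁ : D₁.PosSemidef)
    (hliC : LinearIndependent ℂ ![C₁, C₂])
    (hliD : LinearIndependent ℂ ![D₁, D₂])
    (hdec : A = C₁ ⊗ₖ D₁ + C₂ ⊗ₖ D₂)
    (hrC : ∀ x : Fin k → ℂ, (∃ z, C₂ *ᵥ z = x) → ∃ z, C₁ *ᵥ z = x)
    (hrD : ∀ y : Fin m → ℂ, (∃ z, D₂ *ᵥ z = y) → ∃ z, D₁ *ᵥ z = y) :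
    ∃ (α₁ α₂ : Matrix (Fin k) (Fin k) ℂ) (β₁ β₂ : Matrix (Fin m) (Fin m) ℂ),
      α₁.PosSemidef ∧ α₂.PosSemidef ∧ β₁.PosSemidef ∧ β₂.PosSemidef ∧
      A = α₁ ⊗ₖ β₁ + α₂ ⊗ₖ β₂ := by
  classical
  have hC₁ne : C₁ ≠ 0 := by
    have := hliC.ne_zero 0
    simpa using this
  have hC₂ne : C₂ ≠ 0 := by
    have := hliC.ne_zero 1
    simpa using this
  have hpair' : ∀ c : ℂ, ¬ c • C₂ = C₁ := by
    have := (linearIndependent_fin2.mp hliC).2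
    simpa using this
  have hCpair : ∀ c : ℂ, c • C₁ ≠ C₂ := by
    intro c hc
    rcases eq_or_ne c 0 with rfl | hc0
    · rw [zero_smul] at hc
      exact hC₂ne hc.symm
    · exact hpair' c⁻¹ (by rw [← hc, smul_smul, inv_mul_cancel₀ hc0, one_smul])
  have hkerC : ∀ x, C₁ *ᵥ x = 0 → C₂ *ᵥ x = 0 := ker_incl hC₁.1 hC₂ hrC
  have hcomp : ∀ x : Fin k → ℂ, (((star x ⬝ᵥ C₁ *ᵥ x).re : ℂ) • D₁
      + ((star x ⬝ᵥ C₂ *ᵥ x).re : ℂ) • D₂).PosSemidef :=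
    fun x => compress hA hC₁.1 hC₂ hD₁.1 hD₂ hdec x
  obtain ⟨b, hb1, hb2⟩ :=
    half hC₁ hC₂ hD₁.1 hD₂ hC₁ne hkerC (exists_shift hC₁ hC₂ hkerC) hcomp
  have hkerC' : ∀ x, C₁ *ᵥ x = 0 → (-C₂) *ᵥ x = 0 := by
    intro x hx
    rw [neg_mulVec, hkerC x hx, neg_zero]
  have hcomp' : ∀ x : Fin k → ℂ, (((star x ⬝ᵥ C₁ *ᵥ x).re : ℂ) • D₁
      + ((star x ⬝ᵥ (-C₂) *ᵥ x).re : ℂ) • (-D₂)).PosSemidef := by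
    intro x
    have heq : ((star x ⬝ᵥ (-C₂) *ᵥ x).re : ℂ) • (-D₂)
        = ((star x ⬝ᵥ C₂ *ᵥ x).re : ℂ) • D₂ := by
      rw [neg_mulVec, dotProduct_neg, Complex.neg_re]
      push_cast
      rw [neg_smul, smul_neg, neg_neg]
    rw [heq]
    exact hcomp x
  obtain ⟨a', ha1, ha2⟩ :=
    half hC₁ hC₂.neg hD₁.1 hD₂.neg hC₁ne hkerC' (exists_shift hC₁ hC₂.neg hkerC') hcomp'
  set a : ℝ := -a' with hadef
  have ha1' : (C₂ - (a : ℂ) • C₁).PosSemidef := by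
    have heq : C₂ - (a : ℂ) • C₁ = (a' : ℂ) • C₁ - -C₂ := by
      rw [hadef]
      push_cast
      module
    rw [heq]
    exact ha1
  have ha2' : (D₁ + (a : ℂ) • D₂).PosSemidef := by
    have heq : D₁ + (a : ℂ) • D₂ = D₁ + (a' : ℂ) • (-D₂) := by
      rw [hadef]
      push_cast
      module
    rw [heq]
    exact ha2
  obtain ⟨x₀, hx₀⟩ := exists_pos_form hC₁ hC₁ne
  have hab : a < b := by
    have hsum := hb1.add ha1'
    have hsum' : ((b : ℂ) • C₁ - C₂) + (C₂ - (a : ℂ) • C₁) = ((b - a : ℝ) : ℂ) • C₁ := by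
      push_cast
      module
    rw [hsum'] at hsum
    have h1 := psd_re_nonneg' hsum x₀
    have h2 : (star x₀ ⬝ᵥ (((b - a : ℝ) : ℂ) • C₁) *ᵥ x₀).re
        = (b - a) * (star x₀ ⬝ᵥ C₁ *ᵥ x₀).re := by
      rw [smul_mulVec, dotProduct_smul, smul_eq_mul, Complex.mul_re,
        Complex.ofReal_re, Complex.ofReal_im]
      ring
    rw [h2] at h1
    have hle : a ≤ b := by nlinarith
    rcases lt_or_eq_of_le hle with h | h
    · exact h
    · exfalso
      have hneg : (-((b : ℂ) • C₁ - C₂)).PosSemidef := by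
        have heq : -((b : ℂ) • C₁ - C₂) = C₂ - (a : ℂ) • C₁ := by
          rw [← h]
          module
        rw [heq]
        exact ha1'
      have hz := psd_neg_eq_zero hb1 hneg
      exact hCpair (b : ℂ) (sub_eq_zero.mp hz)
  set s : ℝ := b - a with hsdef
  have hspos : 0 < s := by rw [hsdef]; linarith
  have hsinv : 0 ≤ s⁻¹ := inv_nonneg.mpr hspos.le
  refine ⟨((s⁻¹ : ℝ) : ℂ) • (C₂ - (a : ℂ) • C₁), ((s⁻¹ : ℝ) : ℂ) • ((b : ℂ) • C₁ - C₂),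
      D₁ + (b : ℂ) • D₂, D₁ + (a : ℂ) • D₂,
      psd_smul_real ha1' hsinv, psd_smul_real hb1 hsinv, hb2, ha2', ?_⟩
  have hbane : (b : ℂ) - (a : ℂ) ≠ 0 := by
    rw [sub_ne_zero]
    exact_mod_cast ne_of_gt hab
  have hconv : ((s⁻¹ : ℝ) : ℂ) = ((b : ℂ) - (a : ℂ))⁻¹ := by
    rw [hsdef]
    push_cast
    ring
  rw [hdec, hconv]
  ext ⟨i, p⟩ ⟨j, q⟩
  simp only [Matrix.add_apply, kroneckerMap_apply, Matrix.smul_apply, Matrix.sub_apply,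
    smul_eq_mul]
  field_simp
  ring
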